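/- The formal power series F(x) = x/(1−x)^3 and G(x) = the compositional inverse of x/(1+x)^3 satisfy G(−F(−x)) = x as formal power series; equivalently, if F_BG(x) denotes the series with F_BG^{-1}(x) = x/(1+x)^3 and F_{BG^!}(x) = x/(1−x)^3, then F_BG(−F_{BG^!}(−x)) = x. -/

import Mathlib

open PowerSeries

/-- Composition `f(g(x))` of formal power series (meaningful when `g` has zero constant
term: the coefficient of `xⁿ` only involves `gᵏ` for `k ≤ n`). -/
noncomputable def PowerSeries.comp (f g : PowerSeries ℚ) : PowerSeries ℚ :=
  PowerSeries.mk fun n =>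
    PowerSeries.coeff n (∑ k ∈ Finset.range (n + 1), (PowerSeries.coeff k f) • g ^ k)

lemma rescale_inv_one_sub :
    PowerSeries.rescale (-1 : ℚ) ((1 - PowerSeries.X)⁻¹) = (1 + PowerSeries.X)⁻¹ := by
  rw [PowerSeries.eq_inv_iff_mul_eq_one (by simp)]
  have h : (1 - PowerSeries.X : PowerSeries ℚ) * (1 - PowerSeries.X)⁻¹ = 1 :=
    PowerSeries.mul_inv_cancel _ (by simp)
  have := congrArg (PowerSeries.rescale (-1 : ℚ)) h
  rw [map_mul, map_one] at this
  rw [show PowerSeries.rescale (-1 : ℚ) (1 - PowerSeries.X) = 1 + PowerSeries.X by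
    rw [map_sub, map_one, PowerSeries.rescale_X, map_neg, map_one]; ring] at this
  linear_combination this

/-- let `F(x) = x/(1−x)³` and let `G` be the compositional inverse of
`P(x) = x/(1+x)³`.  Then `G(−F(−x)) = x`. -/
theorem koszul_dual_series_inverse (F P G : PowerSeries ℚ)
    (hF : F = PowerSeries.X * ((1 - PowerSeries.X)⁻¹) ^ 3)
    (hP : P = PowerSeries.X * ((1 + PowerSeries.X)⁻¹) ^ 3)
    (hG0 : PowerSeries.constantCoeff G = 0)
    (hGP : PowerSeries.comp G P = PowerSeries.X)
    (hPG : PowerSeries.comp P G = PowerSeries.X) :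
    PowerSeries.comp G (-(PowerSeries.rescale (-1) F)) = PowerSeries.X := by
  have key : -(PowerSeries.rescale (-1 : ℚ) F) = P := by
    rw [hF, hP, map_mul, map_pow, rescale_inv_one_sub, PowerSeries.rescale_X,
      map_neg, map_one]
    ring
  rw [key]
  exact hGP
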